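/- Fix β₁,β₂ > 0, ν₁,ν₂ ∈ (0,1) and ρ₁,ρ₂ ∈ (0,1). Define A = β₁(1−ν₁)+β₂(1−ν₂), a = β₁(1−ν₁)−β₂(1−ν₂), B = β₁ν₁+β₂ν₂, b = −β₁ν₁+β₂ν₂, D = β₁(1−ν₁)(1−ρ₁)+β₂(1−ν₂)(1−ρ₂), d = −β₁(1−ν₁)(1−ρ₁)+β₂(1−ν₂)(1−ρ₂), and m = 1 − (DB − bd)/(AB + ba); assume m > 0 (which holds in this parameter range). Consider the system z'(t) = m(1 − e^{z(t)}) − u(t) + (b/B)w(t), u'(t) = (A + ba/B)·m·(e^{z(t)} − 1), w'(t) = a·m·(e^{z(t)} − 1) − B·w(t). If B² > a·b, then every solution (z,u,w) defined on [0,∞) satisfies (z(t),u(t),w(t)) → (0,0,0) as t → ∞. -/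

import Mathlib

open Filter


private lemma mono_aux {f f' : ℝ → ℝ} (hf : ∀ x, HasDerivAt f (f' x) x)
    (h' : ∀ x, 0 < x → 0 ≤ f' x) {x : ℝ} (hx : 0 ≤ x) : f 0 ≤ f x := by
  have hmono : MonotoneOn f (Set.Ici 0) := by
    apply monotoneOn_of_deriv_nonneg (convex_Ici 0)
    · exact fun t _ => (hf t).continuousAt.continuousWithinAt
    · exact fun t _ => ((hf t).differentiableAt).differentiableWithinAt
    · intro t ht
      rw [interior_Ici] at ht
      rw [(hf t).deriv]
      exact h' t ht
  exact hmono Set.self_mem_Ici hx hx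

private lemma anti_aux {f f' : ℝ → ℝ} (hf : ∀ x, HasDerivAt f (f' x) x)
    (h' : ∀ x, x < 0 → f' x ≤ 0) {x : ℝ} (hx : x ≤ 0) : f 0 ≤ f x := by
  have hanti : AntitoneOn f (Set.Iic 0) := by
    apply antitoneOn_of_deriv_nonpos (convex_Iic 0)
    · exact fun t _ => (hf t).continuousAt.continuousWithinAt
    · exact fun t _ => ((hf t).differentiableAt).differentiableWithinAt
    · intro t ht
      rw [interior_Iic] at ht
      rw [(hf t).deriv]
      exact h' t ht
  exact hanti hx Set.self_mem_Iic hx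

private lemma exp_quad {x : ℝ} (hx : 0 ≤ x) : 1 + x + x^2/2 ≤ Real.exp x := by
  have key : ∀ y : ℝ, HasDerivAt (fun y => Real.exp y - 1 - y - y^2/2) (Real.exp y - 1 - y) y := by
    intro y
    have h1 : HasDerivAt (fun y : ℝ => y^2/2) y y := by
      simpa using (hasDerivAt_pow 2 y).div_const 2
    have := (((Real.hasDerivAt_exp y).sub_const 1).sub (hasDerivAt_id y)).sub h1
    exact this.congr_deriv (by ring)
  have h0 := mono_aux key (fun y hy => by nlinarith [Real.add_one_le_exp y]) hx
  simp at h0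
  nlinarith [h0]

private lemma exp_lb_neg {x : ℝ} (hx : x ≤ 0) : Real.exp x * x^2/2 ≤ Real.exp x - x - 1 := by
  have key : ∀ y : ℝ, HasDerivAt (fun y => (Real.exp y - y - 1) - Real.exp y * y^2/2)
      ((Real.exp y - 1) - (Real.exp y * y^2 + Real.exp y * (2*y))/2) y := by
    intro y
    have h1 : HasDerivAt (fun y : ℝ => Real.exp y * y^2) (Real.exp y * y^2 + Real.exp y * (2*y)) y := by
      exact ((Real.hasDerivAt_exp y).mul (hasDerivAt_pow 2 y)).congr_deriv (by norm_num)
    have := (((Real.hasDerivAt_exp y).sub (hasDerivAt_id y)).sub_const 1).sub (h1.div_const 2)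
    exact this.congr_deriv (by ring)
  have h' : ∀ y, y < 0 → ((Real.exp y - 1) - (Real.exp y * y^2 + Real.exp y * (2*y))/2) ≤ 0 := by
    intro y hy
    have h1 : Real.exp y * Real.exp (-y) = 1 := by rw [← Real.exp_add]; simp
    have h2 := Real.add_one_le_exp (-y)
    nlinarith [Real.exp_pos y, sq_nonneg y, mul_pos (Real.exp_pos y) (Real.exp_pos (-y))]
  have h0 := anti_aux key h' hx
  simp at h0
  nlinarith [h0]

private lemma exp_ub_neg {x : ℝ} (hx : x ≤ 0) : Real.exp x - x - 1 ≤ x^2/2 := by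
  have h1 : Real.exp x * Real.exp (-x) = 1 := by rw [← Real.exp_add]; simp
  have h2 := exp_quad (neg_nonneg.mpr hx)
  have h3 : (0:ℝ) < 1 - x + x^2/2 := by nlinarith [sq_nonneg (x-1)]
  have h4 : Real.exp x * (1 - x + x^2/2) ≤ 1 := by
    have : (1:ℝ) - x + x^2/2 ≤ Real.exp (-x) := by
      have : 1 + (-x) + (-x)^2/2 ≤ Real.exp (-x) := h2
      nlinarith [this]
    nlinarith [Real.exp_pos x]
  nlinarith [sq_nonneg (x^2), Real.exp_pos x, sq_nonneg (x+1)]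

private lemma exp_ub_pos {x : ℝ} (hx : 0 ≤ x) : Real.exp x - x - 1 ≤ x^2 * Real.exp x / 2 := by
  have key : ∀ y : ℝ, HasDerivAt (fun y => y^2 * Real.exp y / 2 - (Real.exp y - y - 1))
      ((2*y*Real.exp y + y^2*Real.exp y)/2 - (Real.exp y - 1)) y := by
    intro y
    have h1 : HasDerivAt (fun y : ℝ => y^2 * Real.exp y) (2*y*Real.exp y + y^2*Real.exp y) y := by
      have := (hasDerivAt_pow 2 y).mul (Real.hasDerivAt_exp y)
      exact this.congr_deriv (by norm_num)
    have := (h1.div_const 2).sub (((Real.hasDerivAt_exp y).sub (hasDerivAt_id y)).sub_const 1)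
    exact this.congr_deriv (by ring)
  have h' : ∀ y, 0 < y → 0 ≤ (2*y*Real.exp y + y^2*Real.exp y)/2 - (Real.exp y - 1) := by
    intro y hy
    have h1 : Real.exp y * Real.exp (-y) = 1 := by rw [← Real.exp_add]; simp
    have h2 := Real.add_one_le_exp (-y)
    nlinarith [Real.exp_pos y, sq_nonneg y]
  have h0 := mono_aux key h' hx
  simp at h0
  nlinarith [h0]

private lemma cross_bound {p q r : ℝ} (hr : 0 ≤ r) (h : p^2 ≤ r^2*q^2) : q*p ≤ r*q^2 := by
  rcases hr.eq_or_lt with h0 | h0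
  · have hr0 : r = 0 := h0.symm
    subst hr0
    have hp : p = 0 := by
      have h2 : p^2 ≤ 0 := by nlinarith [h]
      exact sq_eq_zero_iff.mp (le_antisymm h2 (sq_nonneg p))
    simp [hp]
  · nlinarith [sq_nonneg (r*q - p), h, h0]

set_option maxHeartbeats 1600000 in
theorem two_agent_global_stability (β₁ β₂ ν₁ ν₂ ρ₁ ρ₂ : ℝ)
    (hβ₁ : 0 < β₁) (hβ₂ : 0 < β₂)
    (hν₁ : ν₁ ∈ Set.Ioo (0:ℝ) 1) (hν₂ : ν₂ ∈ Set.Ioo (0:ℝ) 1)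
    (hρ₁ : ρ₁ ∈ Set.Ioo (0:ℝ) 1) (hρ₂ : ρ₂ ∈ Set.Ioo (0:ℝ) 1)
    (A a B b D d m : ℝ)
    (hA : A = β₁ * (1 - ν₁) + β₂ * (1 - ν₂))
    (ha : a = β₁ * (1 - ν₁) - β₂ * (1 - ν₂))
    (hB : B = β₁ * ν₁ + β₂ * ν₂)
    (hb : b = -(β₁ * ν₁) + β₂ * ν₂)
    (hD : D = β₁ * (1 - ν₁) * (1 - ρ₁) + β₂ * (1 - ν₂) * (1 - ρ₂))
    (hd : d = -(β₁ * (1 - ν₁) * (1 - ρ₁)) + β₂ * (1 - ν₂) * (1 - ρ₂))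
    (hm : m = 1 - (D * B - b * d) / (A * B + b * a))
    (hmpos : 0 < m)
    (hstab : B ^ 2 > a * b)
    (z u w : ℝ → ℝ)
    (hz : ∀ t : ℝ, 0 ≤ t →
      HasDerivAt z (m * (1 - Real.exp (z t)) - u t + (b / B) * w t) t)
    (hu : ∀ t : ℝ, 0 ≤ t →
      HasDerivAt u ((A + b * a / B) * m * (Real.exp (z t) - 1)) t)
    (hw : ∀ t : ℝ, 0 ≤ t →
      HasDerivAt w (a * m * (Real.exp (z t) - 1) - B * w t) t) :
    Tendsto z atTop (nhds 0) ∧ Tendsto u atTop (nhds 0) ∧ Tendsto w atTop (nhds 0) := by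
  obtain ⟨hν₁0, hν₁1⟩ := hν₁
  obtain ⟨hν₂0, hν₂1⟩ := hν₂
  -- basic positivity
  have hBpos : 0 < B := by
    rw [hB]; linarith [mul_pos hβ₁ hν₁0, mul_pos hβ₂ hν₂0]
  have hBne : B ≠ 0 := ne_of_gt hBpos
  set bB : ℝ := b / B with hbBdef
  clear_value bB
  have hAma : 0 < A - a := by rw [hA, ha]; linarith [mul_pos hβ₂ (by linarith : (0:ℝ) < 1 - ν₂)]
  have hApa : 0 < A + a := by rw [hA, ha]; linarith [mul_pos hβ₁ (by linarith : (0:ℝ) < 1 - ν₁)]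
  have hBmb : 0 < B - b := by rw [hB, hb]; linarith [mul_pos hβ₁ hν₁0]
  have hBpb : 0 < B + b := by rw [hB, hb]; linarith [mul_pos hβ₂ hν₂0]
  have hABab : 0 < A * B + a * b := by linarith only [mul_pos hAma hBmb, mul_pos hApa hBpb]
  set k : ℝ := (A + b * a / B) * m with hkdef
  clear_value k
  have hk : 0 < k := by
    rw [hkdef]
    apply mul_pos _ hmpos
    have h0 : A + b * a / B = (A * B + a * b) / B := by
      rw [eq_div_iff hBne]
      field_simp
    rw [h0]; exact div_pos hABab hBpos
  set P : ℝ := 1 / (2 * k) with hPdef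
  clear_value P
  have hPpos : 0 < P := by rw [hPdef]; positivity
  -- choice of Q
  obtain ⟨Q, hQpos, hQc⟩ : ∃ Q : ℝ, 0 < Q ∧ (b / B + 2 * Q * a * m) ^ 2 < 8 * m * Q * B := by
    by_cases haz : a = 0
    · have h1 : 0 < 4 * m * B ^ 3 := by positivity
      refine ⟨b ^ 2 / (4 * m * B ^ 3) + 1, by positivity, ?_⟩
      subst haz
      have h8 : 8 * m * (b ^ 2 / (4 * m * B ^ 3) + 1) * B = 2 * (b ^ 2 / B ^ 2) + 8 * m * B := by
        field_simp; ring
      have h9 : (b / B + 2 * (b ^ 2 / (4 * m * B ^ 3) + 1) * 0 * m) ^ 2 = b ^ 2 / B ^ 2 := by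
        field_simp
        ring
      rw [h8, h9]
      have h10 : 0 ≤ b ^ 2 / B ^ 2 := by positivity
      have h11 : 0 < 8 * m * B := by positivity
      linarith
    · have ha2 : 0 < a ^ 2 := by positivity
      have hnum : 0 < 2 * B ^ 2 - a * b := by linarith [sq_nonneg B, hstab]
      refine ⟨(2 * B ^ 2 - a * b) / (2 * m * a ^ 2 * B), div_pos hnum (by positivity), ?_⟩
      have h1 : b / B + 2 * ((2 * B ^ 2 - a * b) / (2 * m * a ^ 2 * B)) * a * m = 2 * B / a := by
        field_simp; ring
      have h2 : 8 * m * ((2 * B ^ 2 - a * b) / (2 * m * a ^ 2 * B)) * B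
          = 4 * (2 * B ^ 2 - a * b) / a ^ 2 := by
        field_simp; ring
      rw [h1, h2, div_pow, div_lt_div_iff₀ ha2 ha2]
      linarith [mul_pos (show (0:ℝ) < B ^ 2 - a * b by linarith) ha2]
  set c : ℝ := bB + 2 * Q * a * m with hcdef
  clear_value c
  set s : ℝ := 2 * Q * B with hsdef
  clear_value s
  have hspos : 0 < s := by rw [hsdef]; positivity
  have hcs : c ^ 2 / 4 < m * s := by
    have h1 : (8:ℝ) * m * Q * B = 4 * (m * s) := by rw [hsdef]; ring
    rw [hcdef, hbBdef]
    linarith [hQc, h1]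
  have hms : 0 < m + s := by linarith
  set ε : ℝ := (m * s - c ^ 2 / 4) / (m + s) with hεdef
  clear_value ε
  have hεpos : 0 < ε := by rw [hεdef]; exact div_pos (by linarith) hms
  have hεeq : ε * (m + s) = m * s - c ^ 2 / 4 := by
    rw [hεdef]; exact div_mul_cancel₀ _ (ne_of_gt hms)
  have hεm : ε < m := by nlinarith only [hεeq, sq_nonneg c, hms, hmpos, hspos]
  have hεs : ε < s := by nlinarith only [hεeq, sq_nonneg c, hms, hmpos, hspos]
  have hid : 4 * (m - ε) * (s - ε) - c ^ 2 = 4 * ε ^ 2 := by linear_combination (-4) * hεeq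
  have hform : ∀ X Y : ℝ, ε * (X ^ 2 + Y ^ 2) ≤ m * X ^ 2 - c * X * Y + s * Y ^ 2 := by
    intro X Y
    have h1 : 0 ≤ (2 * (m - ε) * X - c * Y) ^ 2 + 4 * ε ^ 2 * Y ^ 2 := by positivity
    have h2 : (2 * (m - ε) * X - c * Y) ^ 2 + 4 * ε ^ 2 * Y ^ 2
        = 4 * (m - ε) * ((m - ε) * X ^ 2 - c * X * Y + (s - ε) * Y ^ 2) := by
      linear_combination (-(Y ^ 2)) * hid
    have h3 : 0 < 4 * (m - ε) := by linarith
    have h4 : 0 ≤ 4 * (m - ε) * ((m - ε) * X ^ 2 - c * X * Y + (s - ε) * Y ^ 2) := by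
      rw [← h2]; exact h1
    have h5 : 0 ≤ (m - ε) * X ^ 2 - c * X * Y + (s - ε) * Y ^ 2 := by
      have h6 : 4 * (m - ε) * 0 ≤ 4 * (m - ε) * ((m - ε) * X ^ 2 - c * X * Y + (s - ε) * Y ^ 2) := by
        simpa using h4
      exact le_of_mul_le_mul_left h6 h3
    linarith only [h5]
  -- the Lyapunov function V
  set V : ℝ → ℝ := fun t => (Real.exp (z t) - z t - 1) + P * (u t) ^ 2 + Q * (w t) ^ 2
    with hVdef
  clear_value V
  have hVt : ∀ t, V t = (Real.exp (z t) - z t - 1) + P * (u t) ^ 2 + Q * (w t) ^ 2 := by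
    intro t; rw [hVdef]
  have hVd : ∀ t, 0 ≤ t → HasDerivAt V
      (-(m * (Real.exp (z t) - 1) ^ 2 - c * (Real.exp (z t) - 1) * (w t) + s * (w t) ^ 2)) t := by
    intro t ht
    have hzt := hz t ht
    have hut := hu t ht
    have hwt := hw t ht
    have h2 := (hzt.exp.sub hzt).sub_const 1
    have h3 := (hut.pow 2).const_mul P
    have h4 := (hwt.pow 2).const_mul Q
    have h5 := (h2.add h3).add h4
    rw [hVdef]
    refine h5.congr_deriv ?_
    rw [hcdef, hsdef, hPdef]
    push_cast
    field_simp
    ring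
  have hVanti : AntitoneOn V (Set.Ici 0) := by
    apply antitoneOn_of_deriv_nonpos (convex_Ici 0)
    · intro t ht; exact (hVd t ht).continuousAt.continuousWithinAt
    · intro t ht
      rw [interior_Ici] at ht
      exact (hVd t ht.le).differentiableAt.differentiableWithinAt
    · intro t ht
      rw [interior_Ici] at ht
      rw [(hVd t ht.le).deriv]
      have h1 := hform (Real.exp (z t) - 1) (w t)
      linarith [mul_nonneg hεpos.le (add_nonneg (sq_nonneg (Real.exp (z t) - 1)) (sq_nonneg (w t)))]
  have hVle : ∀ t, 0 ≤ t → V t ≤ V 0 := fun t ht => hVanti Set.self_mem_Ici ht ht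
  have hVnonneg : ∀ t, 0 ≤ V t := by
    intro t
    rw [hVt]
    have h1 := Real.add_one_le_exp (z t)
    linarith [mul_nonneg hPpos.le (sq_nonneg (u t)), mul_nonneg hQpos.le (sq_nonneg (w t))]
  have hV0 : 0 ≤ V 0 := hVnonneg 0
  -- the a priori bound on z
  set M : ℝ := max (Real.sqrt (2 * V 0)) (V 0 + 1) with hMdef
  clear_value M
  have hM1 : 1 ≤ M := by
    rw [hMdef]
    exact le_trans (by linarith : (1:ℝ) ≤ V 0 + 1) (le_max_right _ _)
  have hM0 : 0 ≤ M := by linarith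
  have hzM : ∀ t, 0 ≤ t → -M ≤ z t ∧ z t ≤ M := by
    intro t ht
    have h1 : Real.exp (z t) - z t - 1 ≤ V 0 := by
      have h2 := hVle t ht
      rw [hVt] at h2
      linarith [mul_nonneg hPpos.le (sq_nonneg (u t)), mul_nonneg hQpos.le (sq_nonneg (w t))]
    constructor
    · rcases le_or_gt 0 (z t) with h | h
      · linarith
      · have h3 := Real.exp_pos (z t)
        have h4 : V 0 + 1 ≤ M := by rw [hMdef]; exact le_max_right _ _
        linarith
    · rcases le_or_gt 0 (z t) with h | h
      · have h2 := exp_quad h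
        have h3 : (z t) ^ 2 ≤ 2 * V 0 := by linarith
        have h4 : z t ≤ Real.sqrt (2 * V 0) := by
          calc z t ≤ |z t| := le_abs_self _
            _ = Real.sqrt ((z t) ^ 2) := (Real.sqrt_sq_eq_abs _).symm
            _ ≤ Real.sqrt (2 * V 0) := Real.sqrt_le_sqrt h3
        exact h4.trans (by rw [hMdef]; exact le_max_left _ _)
      · linarith
  set eM : ℝ := Real.exp M with heMdef
  clear_value eM
  have heMpos : 0 < eM := by rw [heMdef]; exact Real.exp_pos M
  have heM1 : 1 ≤ eM := by rw [heMdef]; exact Real.one_le_exp hM0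
  have hzlb : ∀ t, 0 ≤ t → Real.exp (-M) ≤ Real.exp (z t) :=
    fun t ht => Real.exp_le_exp.mpr (hzM t ht).1
  have hzub : ∀ t, 0 ≤ t → Real.exp (z t) ≤ eM := by
    intro t ht; rw [heMdef]; exact Real.exp_le_exp.mpr (hzM t ht).2
  have hmM : Real.exp (-M) * eM = 1 := by rw [heMdef, ← Real.exp_add]; simp
  -- comparison of z with exp z - 1
  have hEz : ∀ t, 0 ≤ t → (z t) ^ 2 ≤ eM ^ 2 * (Real.exp (z t) - 1) ^ 2 := by
    intro t ht
    rcases le_or_gt 0 (z t) with h | h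
    · have h2 := Real.add_one_le_exp (z t)
      have ha1 : (z t) ^ 2 ≤ (Real.exp (z t) - 1) ^ 2 := by nlinarith only [h, h2]
      have ha0 : (1:ℝ) ≤ eM ^ 2 := by nlinarith only [heM1]
      have ha2 : (Real.exp (z t) - 1) ^ 2 ≤ eM ^ 2 * (Real.exp (z t) - 1) ^ 2 :=
        le_mul_of_one_le_left (sq_nonneg _) ha0
      linarith only [ha1, ha2]
    · have h2 := Real.add_one_le_exp (-(z t))
      have h1 : Real.exp (z t) * Real.exp (-(z t)) = 1 := by rw [← Real.exp_add]; simp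
      have h3 : (-(z t)) * Real.exp (z t) ≤ 1 - Real.exp (z t) := by
        nlinarith only [h1, h2, Real.exp_pos (z t)]
      have h4 := hzlb t ht
      have h6 : (-(z t)) * Real.exp (-M) ≤ 1 - Real.exp (z t) :=
        le_trans (mul_le_mul_of_nonneg_left h4 (by linarith)) h3
      have h7 : ((-(z t)) * Real.exp (-M)) ^ 2 ≤ (1 - Real.exp (z t)) ^ 2 := by
        nlinarith only [h6, mul_nonneg (by linarith only [h] : (0:ℝ) ≤ -(z t)) (Real.exp_pos (-M)).le]
      have h8 := mul_le_mul_of_nonneg_left h7 (sq_nonneg eM)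
      have h9 : (Real.exp (-M) * eM) ^ 2 = 1 := by rw [hmM]; norm_num
      nlinarith only [h8, h9, sq_nonneg (z t)]
  -- quadratic bounds on exp z - z - 1
  set κ : ℝ := Real.exp (-M) / 2 with hκdef
  clear_value κ
  have hκpos : 0 < κ := by rw [hκdef]; positivity
  have hlow : ∀ t, 0 ≤ t → κ * (z t) ^ 2 ≤ Real.exp (z t) - z t - 1 := by
    intro t ht
    rw [hκdef]
    rcases le_or_gt 0 (z t) with h | h
    · have h2 := exp_quad h
      have h3 : Real.exp (-M) ≤ 1 := by
        rw [show (1:ℝ) = Real.exp 0 from Real.exp_zero.symm]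
        exact Real.exp_le_exp.mpr (by linarith)
      nlinarith only [h, h2, h3, sq_nonneg (z t), Real.exp_pos (-M)]
    · have h2 := exp_lb_neg h.le
      have h4 := hzlb t ht
      nlinarith only [h2, h4, sq_nonneg (z t)]
  have hup : ∀ t, 0 ≤ t → Real.exp (z t) - z t - 1 ≤ (eM / 2) * (z t) ^ 2 := by
    intro t ht
    rcases le_or_gt 0 (z t) with h | h
    · have h2 := exp_ub_pos h
      have h3 := hzub t ht
      nlinarith only [h2, h3, sq_nonneg (z t)]
    · have h2 := exp_ub_neg h.le
      nlinarith only [h2, heM1, sq_nonneg (z t)]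
  -- the coupling constant η
  have hmb2 : 0 < m ^ 2 + bB ^ 2 := by positivity
  set η : ℝ := min (min (ε / (4 * k * eM)) (ε / (2 * (m ^ 2 + bB ^ 2)))) (min κ P) with hηdef
  clear_value η
  have hηpos : 0 < η := by
    rw [hηdef]
    have h1 : 0 < ε / (4 * k * eM) := div_pos hεpos (by positivity)
    have h2 : 0 < ε / (2 * (m ^ 2 + bB ^ 2)) := div_pos hεpos (by positivity)
    exact lt_min (lt_min h1 h2) (lt_min hκpos hPpos)
  have hη1 : η * (4 * k * eM) ≤ ε := by
    have h1 : η ≤ ε / (4 * k * eM) := by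
      rw [hηdef]; exact le_trans (min_le_left _ _) (min_le_left _ _)
    rw [le_div_iff₀ (by positivity)] at h1
    linarith
  have hη2 : η * (2 * (m ^ 2 + bB ^ 2)) ≤ ε := by
    have h1 : η ≤ ε / (2 * (m ^ 2 + bB ^ 2)) := by
      rw [hηdef]; exact le_trans (min_le_left _ _) (min_le_right _ _)
    rw [le_div_iff₀ (by positivity)] at h1
    linarith
  have hη3 : η ≤ κ := by
    rw [hηdef]; exact le_trans (min_le_right _ _) (min_le_left _ _)
  have hη4 : η ≤ P := by
    rw [hηdef]; exact le_trans (min_le_right _ _) (min_le_right _ _)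
  -- the decay rate
  set C : ℝ := eM / 2 with hCdef
  clear_value C
  set γ : ℝ := ε / (2 * eM ^ 2) with hγdef
  clear_value γ
  have hγpos : 0 < γ := by rw [hγdef]; positivity
  have hγeq : γ * eM ^ 2 = ε / 2 := by
    rw [hγdef]; field_simp
  have hCη : 0 < C + η / 2 := by
    have : 0 < C := by rw [hCdef]; positivity
    linarith
  have hPη : 0 < P + η / 2 := by linarith
  set cw : ℝ := min (min (γ / (C + η / 2)) ((η / 2) / (P + η / 2))) ((3 * ε / 4) / Q)
    with hcwdef
  clear_value cw
  have hcwpos : 0 < cw := by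
    rw [hcwdef]
    exact lt_min (lt_min (div_pos hγpos hCη) (div_pos (by linarith) hPη))
      (div_pos (by linarith) hQpos)
  have hcw1 : cw * (C + η / 2) ≤ γ := by
    have h1 : cw ≤ γ / (C + η / 2) := by
      rw [hcwdef]; exact le_trans (min_le_left _ _) (min_le_left _ _)
    rw [le_div_iff₀ hCη] at h1
    linarith
  have hcw2 : cw * (P + η / 2) ≤ η / 2 := by
    have h1 : cw ≤ (η / 2) / (P + η / 2) := by
      rw [hcwdef]; exact le_trans (min_le_left _ _) (min_le_right _ _)
    rw [le_div_iff₀ hPη] at h1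
    linarith
  have hcw3 : cw * Q ≤ 3 * ε / 4 := by
    have h1 : cw ≤ (3 * ε / 4) / Q := by
      rw [hcwdef]; exact min_le_right _ _
    rw [le_div_iff₀ hQpos] at h1
    linarith
  -- the strict Lyapunov function W
  set W : ℝ → ℝ := fun t => V t + η * (u t * z t) with hWdef
  clear_value W
  have hWt : ∀ t, W t = ((Real.exp (z t) - z t - 1) + P * (u t) ^ 2 + Q * (w t) ^ 2)
      + η * (u t * z t) := by
    intro t
    have h0 : W t = V t + η * (u t * z t) := by rw [hWdef]
    rw [h0, hVt]
  have hWd : ∀ t, 0 ≤ t → HasDerivAt W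
      (-(m * (Real.exp (z t) - 1) ^ 2 - c * (Real.exp (z t) - 1) * (w t) + s * (w t) ^ 2)
        + η * ((k * (Real.exp (z t) - 1)) * z t
          + u t * (m * (1 - Real.exp (z t)) - u t + bB * w t))) t := by
    intro t ht
    rw [hWdef]
    exact (hVd t ht).add (((hu t ht).mul (hz t ht)).const_mul η)
  -- the key differential inequality
  have hkey : ∀ t, 0 ≤ t →
      (-(m * (Real.exp (z t) - 1) ^ 2 - c * (Real.exp (z t) - 1) * (w t) + s * (w t) ^ 2)
        + η * ((k * (Real.exp (z t) - 1)) * z t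
          + u t * (m * (1 - Real.exp (z t)) - u t + bB * w t)))
      ≤ -cw * W t := by
    intro t ht
    set X : ℝ := Real.exp (z t) - 1 with hX
    clear_value X
    have hXe : Real.exp (z t) - 1 = X := hX.symm
    have hA1 := hform X (w t)
    have hA2 : η * k * (X * z t) ≤ (ε / 4) * X ^ 2 := by
      have hxe := hEz t ht
      rw [hXe] at hxe
      have h5 : X * z t ≤ eM * X ^ 2 := cross_bound heMpos.le hxe
      have h6 : 0 ≤ η * k := by positivity
      have h7 : η * k * eM ≤ ε / 4 := by linarith
      calc η * k * (X * z t) ≤ η * k * (eM * X ^ 2) := mul_le_mul_of_nonneg_left h5 h6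
        _ = (η * k * eM) * X ^ 2 := by ring
        _ ≤ (ε / 4) * X ^ 2 := mul_le_mul_of_nonneg_right h7 (sq_nonneg X)
    have hA3 : η * (u t * (-(m * X))) ≤ (ε / 4) * X ^ 2 + (η ^ 2 * m ^ 2 / ε) * (u t) ^ 2 := by
      rw [← sub_nonneg]
      have hexpand : (ε / 4) * X ^ 2 + (η ^ 2 * m ^ 2 / ε) * (u t) ^ 2 - η * (u t * (-(m * X)))
          = (ε * X / 2 + η * m * u t) ^ 2 / ε := by
        field_simp; ring
      rw [hexpand]; positivity
    have hA4 : η * (u t * (bB * w t)) ≤ (ε / 4) * (w t) ^ 2 + (η ^ 2 * bB ^ 2 / ε) * (u t) ^ 2 := by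
      rw [← sub_nonneg]
      have hexpand : (ε / 4) * (w t) ^ 2 + (η ^ 2 * bB ^ 2 / ε) * (u t) ^ 2
          - η * (u t * (bB * w t)) = (ε * w t / 2 - η * bB * u t) ^ 2 / ε := by
        field_simp; ring
      rw [hexpand]; positivity
    have hA5 : (η ^ 2 * m ^ 2 / ε) * (u t) ^ 2 + (η ^ 2 * bB ^ 2 / ε) * (u t) ^ 2 - η * (u t) ^ 2
        ≤ -(η / 2) * (u t) ^ 2 := by
      have h8 : η ^ 2 * (m ^ 2 + bB ^ 2) / ε ≤ η / 2 := by
        rw [div_le_iff₀ hεpos]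
        nlinarith only [hη2, hηpos]
      have h9 := mul_le_mul_of_nonneg_right h8 (sq_nonneg (u t))
      have h10 : η ^ 2 * (m ^ 2 + bB ^ 2) / ε * (u t) ^ 2
          = (η ^ 2 * m ^ 2 / ε) * (u t) ^ 2 + (η ^ 2 * bB ^ 2 / ε) * (u t) ^ 2 := by
        field_simp
      rw [h10] at h9
      linarith
    have hmx : m * (1 - Real.exp (z t)) = -(m * X) := by rw [hX]; ring
    rw [hmx]
    have hB1 : (-(m * X ^ 2 - c * X * (w t) + s * (w t) ^ 2)
        + η * ((k * X) * z t + u t * (-(m * X) - u t + bB * w t)))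
        ≤ -(ε / 2) * X ^ 2 - (3 * ε / 4) * (w t) ^ 2 - (η / 2) * (u t) ^ 2 := by
      have hexp : η * ((k * X) * z t + u t * (-(m * X) - u t + bB * w t))
          = η * k * (X * z t) + η * (u t * (-(m * X))) - η * (u t) ^ 2
            + η * (u t * (bB * w t)) := by ring
      rw [hexp]
      linarith [hA1, hA2, hA3, hA4, hA5]
    have hB2 : -(ε / 2) * X ^ 2 ≤ -γ * (z t) ^ 2 := by
      have hxe := hEz t ht
      rw [hXe] at hxe
      have h11 := mul_le_mul_of_nonneg_left hxe hγpos.le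
      have h12 : γ * eM ^ 2 * X ^ 2 = ε / 2 * X ^ 2 := by rw [hγeq]
      linarith [h11, h12]
    have hB3 : W t ≤ (C + η / 2) * (z t) ^ 2 + (P + η / 2) * (u t) ^ 2 + Q * (w t) ^ 2 := by
      rw [hWt]
      have h9 := hup t ht
      have h10 : η * (u t * z t) ≤ (η / 2) * (u t) ^ 2 + (η / 2) * (z t) ^ 2 := by
        linarith only [mul_nonneg hηpos.le (sq_nonneg (u t - z t))]
      linarith
    have hB4 : -γ * (z t) ^ 2 - (3 * ε / 4) * (w t) ^ 2 - (η / 2) * (u t) ^ 2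
        ≤ -cw * ((C + η / 2) * (z t) ^ 2 + (P + η / 2) * (u t) ^ 2 + Q * (w t) ^ 2) := by
      linarith [mul_le_mul_of_nonneg_right hcw1 (sq_nonneg (z t)),
        mul_le_mul_of_nonneg_right hcw2 (sq_nonneg (u t)),
        mul_le_mul_of_nonneg_right hcw3 (sq_nonneg (w t))]
    have hB5 : -cw * ((C + η / 2) * (z t) ^ 2 + (P + η / 2) * (u t) ^ 2 + Q * (w t) ^ 2)
        ≤ -cw * W t := by
      have h12 := mul_le_mul_of_nonneg_left hB3 hcwpos.le
      linarith
    linarith [hB1, hB2, hB4, hB5]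
  -- Gronwall-type argument
  set G : ℝ → ℝ := fun t => W t * Real.exp (cw * t) with hGdef
  clear_value G
  have hGd : ∀ t, 0 ≤ t → HasDerivAt G
      ((-(m * (Real.exp (z t) - 1) ^ 2 - c * (Real.exp (z t) - 1) * (w t) + s * (w t) ^ 2)
        + η * ((k * (Real.exp (z t) - 1)) * z t
          + u t * (m * (1 - Real.exp (z t)) - u t + bB * w t))) * Real.exp (cw * t)
        + W t * (Real.exp (cw * t) * cw)) t := by
    intro t ht
    have hexp : HasDerivAt (fun τ : ℝ => Real.exp (cw * τ)) (Real.exp (cw * t) * cw) t := by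
      have h1 : HasDerivAt (fun τ : ℝ => cw * τ) cw t := by
        simpa using (hasDerivAt_id t).const_mul cw
      exact h1.exp
    rw [hGdef]
    exact (hWd t ht).mul hexp
  have hGanti : AntitoneOn G (Set.Ici 0) := by
    apply antitoneOn_of_deriv_nonpos (convex_Ici 0)
    · intro t ht; exact (hGd t ht).continuousAt.continuousWithinAt
    · intro t ht
      rw [interior_Ici] at ht
      exact (hGd t ht.le).differentiableAt.differentiableWithinAt
    · intro t ht
      rw [interior_Ici] at ht
      rw [(hGd t ht.le).deriv]
      have h1 := hkey t ht.le
      have h2 := Real.exp_pos (cw * t)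
      linarith [mul_le_mul_of_nonneg_right h1 h2.le]
  have hWle : ∀ t, 0 ≤ t → W t ≤ W 0 * Real.exp (-(cw * t)) := by
    intro t ht
    have h1 : G t ≤ G 0 := hGanti Set.self_mem_Ici ht ht
    rw [hGdef] at h1
    simp only [mul_zero, Real.exp_zero, mul_one] at h1
    calc W t = (W t * Real.exp (cw * t)) * Real.exp (-(cw * t)) := by
          rw [mul_assoc, ← Real.exp_add]; simp
      _ ≤ W 0 * Real.exp (-(cw * t)) :=
          mul_le_mul_of_nonneg_right h1 (Real.exp_pos _).le
  have hWlb : ∀ t, 0 ≤ t →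
      (κ / 2) * (z t) ^ 2 + (P / 2) * (u t) ^ 2 + Q * (w t) ^ 2 ≤ W t := by
    intro t ht
    rw [hWt]
    have h9 := hlow t ht
    have h10 : -(η / 2) * (u t) ^ 2 - (η / 2) * (z t) ^ 2 ≤ η * (u t * z t) := by
      linarith only [mul_nonneg hηpos.le (sq_nonneg (u t + z t))]
    have h11 := mul_le_mul_of_nonneg_right hη3 (sq_nonneg (z t))
    have h12 := mul_le_mul_of_nonneg_right hη4 (sq_nonneg (u t))
    linarith [h9, h10, h11, h12]
  -- convergence
  have hWlim : Tendsto (fun t => W 0 * Real.exp (-(cw * t))) atTop (nhds 0) := by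
    have h1 : Tendsto (fun t : ℝ => -(cw * t)) atTop atBot := by
      have h2 : Tendsto (fun t : ℝ => cw * t) atTop atTop :=
        Tendsto.const_mul_atTop hcwpos tendsto_id
      exact tendsto_neg_atTop_atBot.comp h2
    have h2 := Real.tendsto_exp_atBot.comp h1
    have h3 := h2.const_mul (W 0)
    simpa using h3
  have main : ∀ (f : ℝ → ℝ) (cf : ℝ), 0 < cf → (∀ t, 0 ≤ t → cf * (f t) ^ 2 ≤ W t) →
      Tendsto f atTop (nhds 0) := by
    intro f cf hcf hf
    have hup2 : Tendsto (fun t => (W 0 * Real.exp (-(cw * t))) / cf) atTop (nhds 0) := by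
      simpa using hWlim.div_const cf
    have hsq2 : Tendsto (fun t => (f t) ^ 2) atTop (nhds 0) := by
      apply tendsto_of_tendsto_of_tendsto_of_le_of_le' tendsto_const_nhds hup2
      · exact Eventually.of_forall fun t => sq_nonneg _
      · filter_upwards [eventually_ge_atTop (0:ℝ)] with t ht
        rw [le_div_iff₀ hcf]
        calc (f t) ^ 2 * cf = cf * (f t) ^ 2 := by ring
          _ ≤ W t := hf t ht
          _ ≤ W 0 * Real.exp (-(cw * t)) := hWle t ht
    rw [tendsto_zero_iff_abs_tendsto_zero]
    have h3 : Tendsto (fun t => |f t|) atTop (nhds 0) := by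
      have h4 := (Real.continuous_sqrt.tendsto 0).comp hsq2
      simp only [Function.comp_def] at h4
      simpa [Real.sqrt_sq_eq_abs] using h4
    exact h3
  refine ⟨main z (κ / 2) (by linarith) ?_, main u (P / 2) (by linarith) ?_,
    main w Q hQpos ?_⟩
  · intro t ht
    have h1 := hWlb t ht
    linarith [mul_nonneg (by linarith : (0:ℝ) ≤ P / 2) (sq_nonneg (u t)),
      mul_nonneg hQpos.le (sq_nonneg (w t))]
  · intro t ht
    have h1 := hWlb t ht
    linarith [mul_nonneg (by linarith : (0:ℝ) ≤ κ / 2) (sq_nonneg (z t)),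
      mul_nonneg hQpos.le (sq_nonneg (w t))]
  · intro t ht
    have h1 := hWlb t ht
    linarith [mul_nonneg (by linarith : (0:ℝ) ≤ κ / 2) (sq_nonneg (z t)),
      mul_nonneg (by linarith : (0:ℝ) ≤ P / 2) (sq_nonneg (u t))]
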